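/- For every real d > 0 there exists a constant C > 0 such that for all complex numbers z with Re z ≥ 0 and all real x with 0 < x ≤ d: |(x^z − 1)/(x − 1)| ≤ C·(d+1)^{|z|}, where at x = 1 the quotient is interpreted as its limiting value z. -/

import Mathlib

open scoped Classical

lemma exp_sub_one_norm_le (w : ℂ) :
    ‖Complex.exp w - 1‖ ≤ ‖w‖ * Real.exp (max 0 w.re) := by
  have hder : ∀ t ∈ Set.uIcc (0:ℝ) 1,
      HasDerivAt (fun t : ℝ => Complex.exp ((t:ℂ) * w)) (Complex.exp ((t:ℂ)*w) * w) t := by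
    intro t _
    have h1 : HasDerivAt (fun t : ℝ => (t : ℂ) * w) w t := by
      simpa using (Complex.ofRealCLM.hasDerivAt (x := t)).mul_const w
    simpa using h1.cexp
  have hcont : IntervalIntegrable (fun t : ℝ => Complex.exp ((t:ℂ)*w) * w)
      MeasureTheory.volume 0 1 := by
    apply Continuous.intervalIntegrable
    exact (Complex.continuous_exp.comp (Complex.continuous_ofReal.mul continuous_const)).mul
      continuous_const
  have hint : ∫ t in (0:ℝ)..1, Complex.exp ((t:ℂ)*w) * w = Complex.exp w - 1 := by
    rw [intervalIntegral.integral_eq_sub_of_hasDerivAt hder hcont]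
    simp
  have hb : ∀ t ∈ Set.uIoc (0:ℝ) 1, ‖Complex.exp ((t:ℂ)*w) * w‖ ≤ Real.exp (max 0 w.re) * ‖w‖ := by
    intro t ht
    rw [Set.uIoc_of_le (by norm_num : (0:ℝ) ≤ 1)] at ht
    have h1 : ‖Complex.exp ((t:ℂ)*w) * w‖ = Real.exp (t * w.re) * ‖w‖ := by
      rw [norm_mul, Complex.norm_exp]
      simp [Complex.mul_re, Complex.ofReal_re, Complex.ofReal_im]
    rw [h1]
    have : t * w.re ≤ max 0 w.re := by
      rcases le_or_gt 0 w.re with h | h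
      · exact le_trans (by nlinarith [ht.1.le, ht.2]) (le_max_right _ _)
      · exact le_trans (by nlinarith [ht.1.le]) (le_max_left _ _)
    exact mul_le_mul_of_nonneg_right (Real.exp_le_exp.mpr this) (norm_nonneg w)
  calc ‖Complex.exp w - 1‖ = ‖∫ t in (0:ℝ)..1, Complex.exp ((t:ℂ)*w) * w‖ := by rw [hint]
    _ ≤ Real.exp (max 0 w.re) * ‖w‖ * |1 - 0| :=
        intervalIntegral.norm_integral_le_of_norm_le_const hb
    _ = ‖w‖ * Real.exp (max 0 w.re) := by simp [mul_comm]

lemma t_log_le_rpow (b t : ℝ) (hb : 1 < b) (ht : 0 ≤ t) : t * Real.log b ≤ b ^ t := by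
  rw [Real.rpow_def_of_pos (by linarith)]
  nlinarith [Real.add_one_le_exp (Real.log b * t)]

theorem cpow_kernel_uniform_bound (d : ℝ) (hd : 0 < d) :
    ∃ C : ℝ, 0 < C ∧ ∀ z : ℂ, 0 ≤ z.re → ∀ x : ℝ, 0 < x → x ≤ d →
      ‖if x = 1 then z else ((x : ℂ) ^ z - 1) / ((x : ℂ) - 1)‖ ≤ C * (d + 1) ^ ‖z‖ := by
  have hd1 : (1:ℝ) < d + 1 := by linarith
  set L := Real.log (d + 1) with hLdef
  have hLpos : 0 < L := Real.log_pos hd1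
  have hr1 : (1:ℝ) < (d + 1) / d := by rw [lt_div_iff₀ hd]; linarith
  set M := Real.log ((d + 1) / d) with hMdef
  have hMpos : 0 < M := Real.log_pos hr1
  refine ⟨4 + 2 / L + 1 / M, by positivity, ?_⟩
  intro z hz x hx hxd
  set P := (d + 1) ^ ‖z‖ with hPdef
  have hPpos : 0 < P := Real.rpow_pos_of_pos (by linarith) _
  have hP1 : 1 ≤ P := by
    calc (1:ℝ) = (d+1) ^ (0:ℝ) := by simp
    _ ≤ P := Real.rpow_le_rpow_of_exponent_le hd1.le (norm_nonneg z)
  have hzre : z.re ≤ ‖z‖ := le_trans (Complex.re_le_norm z) (le_of_eq rfl)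
  have hkey : ‖z‖ * L ≤ P := t_log_le_rpow _ _ hd1 (norm_nonneg z)
  have hzP : ‖z‖ ≤ P / L := (le_div_iff₀ hLpos).mpr hkey
  have e : (4 + 2/L + 1/M) * P = 4 * P + 2 * (P / L) + P / M := by ring
  have nL : 0 ≤ P / L := div_nonneg hPpos.le hLpos.le
  have nM : 0 ≤ P / M := div_nonneg hPpos.le hMpos.le
  by_cases hx1 : x = 1
  · rw [if_pos hx1]
    linarith [hzP, hP1, nL, nM]
  · rw [if_neg hx1]
    have hden : ‖(x:ℂ) - 1‖ = |x - 1| := by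
      have h : ((x:ℂ) - 1) = ((x - 1 : ℝ) : ℂ) := by push_cast; ring
      rw [h, Complex.norm_real, Real.norm_eq_abs]
    have hdenpos : 0 < ‖(x:ℂ) - 1‖ := by
      rw [hden, abs_pos]
      intro h; exact hx1 (by linarith)
    have hx0 : (x:ℂ) ≠ 0 := by
      simp only [ne_eq, Complex.ofReal_eq_zero]; exact hx.ne'
    have hrep : (x:ℂ) ^ z = Complex.exp ((Real.log x : ℂ) * z) := by
      rw [Complex.cpow_def_of_ne_zero hx0, Complex.ofReal_log hx.le]
    have hw : ‖(Real.log x : ℂ) * z‖ = |Real.log x| * ‖z‖ := by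
      rw [norm_mul, Complex.norm_real, Real.norm_eq_abs]
    have hwre : ((Real.log x : ℂ) * z).re = Real.log x * z.re := by
      simp [Complex.mul_re]
    have hbound : ‖(x:ℂ) ^ z - 1‖ ≤
        |Real.log x| * ‖z‖ * Real.exp (max 0 (Real.log x * z.re)) := by
      rw [hrep]
      simpa [hw, hwre] using exp_sub_one_norm_le ((Real.log x : ℂ) * z)
    rw [norm_div, div_le_iff₀ hdenpos]
    rcases lt_trichotomy x 1 with hlt | heq | hgt
    · -- x < 1
      have hlog_np : Real.log x ≤ 0 := Real.log_nonpos hx.le hlt.le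
      have hmax : max 0 (Real.log x * z.re) = 0 :=
        max_eq_left (mul_nonpos_of_nonpos_of_nonneg hlog_np hz)
      have habslog : |Real.log x| = -Real.log x := abs_of_nonpos hlog_np
      have hden' : ‖(x:ℂ) - 1‖ = 1 - x := by rw [hden, abs_of_neg (by linarith)]; ring
      rcases le_or_gt x (1/2) with hhalf | hhalf
      · -- x ≤ 1/2 : crude bound
        have hnormpow : ‖(x:ℂ) ^ z‖ ≤ 1 := by
          rw [Complex.norm_cpow_eq_rpow_re_of_pos hx]
          exact Real.rpow_le_one hx.le hlt.le hz
        have h2 : ‖(x:ℂ) ^ z - 1‖ ≤ 2 := by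
          calc ‖(x:ℂ) ^ z - 1‖ ≤ ‖(x:ℂ) ^ z‖ + ‖(1:ℂ)‖ := norm_sub_le _ _
          _ ≤ 2 := by rw [norm_one]; linarith
        have h3 : (1:ℝ)/2 ≤ ‖(x:ℂ) - 1‖ := by rw [hden']; linarith
        have hC4 : (4:ℝ) ≤ (4 + 2/L + 1/M) * P := by linarith [nL, nM, hP1]
        calc ‖(x:ℂ) ^ z - 1‖ ≤ 2 := h2
        _ = 4 * (1/2) := by norm_num
        _ ≤ (4 + 2/L + 1/M) * P * ‖(x:ℂ) - 1‖ :=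
            mul_le_mul hC4 h3 (by norm_num) (by positivity)
      · -- 1/2 < x < 1
        have hloglb : -Real.log x ≤ 2 * (1 - x) := by
          have h4 : Real.log (1/x) ≤ 1/x - 1 := Real.log_le_sub_one_of_pos (by positivity)
          rw [one_div, Real.log_inv] at h4
          have hp : 0 ≤ (2*x - 1) * (1 - x) := by nlinarith
          have hix : x⁻¹ * x = 1 := inv_mul_cancel₀ hx.ne'
          nlinarith [h4, hix, hx]
        have hq : ‖(x:ℂ) ^ z - 1‖ ≤ 2 * ‖z‖ * (1 - x) := by
          calc ‖(x:ℂ) ^ z - 1‖ ≤ |Real.log x| * ‖z‖ * Real.exp (max 0 (Real.log x * z.re)) :=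
              hbound
          _ = (-Real.log x) * ‖z‖ := by rw [hmax, habslog, Real.exp_zero, mul_one]
          _ ≤ 2 * (1 - x) * ‖z‖ := mul_le_mul_of_nonneg_right hloglb (norm_nonneg z)
          _ = 2 * ‖z‖ * (1 - x) := by ring
        calc ‖(x:ℂ) ^ z - 1‖ ≤ 2 * ‖z‖ * (1 - x) := hq
        _ = 2 * ‖z‖ * ‖(x:ℂ) - 1‖ := by rw [hden']
        _ ≤ (4 + 2/L + 1/M) * P * ‖(x:ℂ) - 1‖ := by
            apply mul_le_mul_of_nonneg_right _ hdenpos.le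
            linarith [hzP, hP1, nL, nM]
    · exact absurd heq hx1
    · -- x > 1
      have hlogpos : 0 < Real.log x := Real.log_pos hgt
      have hden' : ‖(x:ℂ) - 1‖ = x - 1 := by rw [hden, abs_of_pos (by linarith)]
      have hmax : max 0 (Real.log x * z.re) = Real.log x * z.re :=
        max_eq_right (mul_nonneg hlogpos.le hz)
      have hexp : Real.exp (Real.log x * z.re) ≤ d ^ ‖z‖ := by
        calc Real.exp (Real.log x * z.re) ≤ Real.exp (Real.log x * ‖z‖) :=
              Real.exp_le_exp.mpr (mul_le_mul_of_nonneg_left hzre hlogpos.le)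
        _ = x ^ ‖z‖ := by rw [← Real.rpow_def_of_pos hx]
        _ ≤ d ^ ‖z‖ := Real.rpow_le_rpow hx.le hxd (norm_nonneg z)
      have hlogle : Real.log x ≤ x - 1 := Real.log_le_sub_one_of_pos hx
      have hdpow : 0 ≤ d ^ ‖z‖ := (Real.rpow_pos_of_pos hd _).le
      have hq : ‖(x:ℂ) ^ z - 1‖ ≤ ‖z‖ * (d ^ ‖z‖) * (x - 1) := by
        calc ‖(x:ℂ) ^ z - 1‖ ≤ |Real.log x| * ‖z‖ * Real.exp (max 0 (Real.log x * z.re)) :=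
            hbound
        _ = Real.log x * ‖z‖ * Real.exp (Real.log x * z.re) := by
            rw [hmax, abs_of_pos hlogpos]
        _ ≤ Real.log x * ‖z‖ * (d ^ ‖z‖) :=
            mul_le_mul_of_nonneg_left hexp (mul_nonneg hlogpos.le (norm_nonneg z))
        _ ≤ (x - 1) * ‖z‖ * (d ^ ‖z‖) :=
            mul_le_mul_of_nonneg_right
              (mul_le_mul_of_nonneg_right hlogle (norm_nonneg z)) hdpow
        _ = ‖z‖ * (d ^ ‖z‖) * (x - 1) := by ring
      have hkey2 : ‖z‖ * M ≤ ((d+1)/d) ^ ‖z‖ := t_log_le_rpow _ _ hr1 (norm_nonneg z)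
      have hmulr : ((d+1)/d) ^ ‖z‖ * d ^ ‖z‖ = P := by
        rw [← Real.mul_rpow (by positivity) hd.le, hPdef]
        congr 1
        field_simp
      have hzd : ‖z‖ * (d ^ ‖z‖) ≤ P / M := by
        rw [le_div_iff₀ hMpos]
        calc ‖z‖ * (d ^ ‖z‖) * M = ‖z‖ * M * d ^ ‖z‖ := by ring
        _ ≤ ((d+1)/d) ^ ‖z‖ * d ^ ‖z‖ := mul_le_mul_of_nonneg_right hkey2 hdpow
        _ = P := hmulr
      calc ‖(x:ℂ) ^ z - 1‖ ≤ ‖z‖ * (d ^ ‖z‖) * (x - 1) := hq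
      _ = ‖z‖ * (d ^ ‖z‖) * ‖(x:ℂ) - 1‖ := by rw [hden']
      _ ≤ (4 + 2/L + 1/M) * P * ‖(x:ℂ) - 1‖ := by
          apply mul_le_mul_of_nonneg_right _ hdenpos.le
          linarith [hzd, hP1, nL, nM]
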